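/- Let B be a k×k matrix with nonzero entries and let B* be its lift: the unique (k+1)×(k+1) matrix with 1's on the diagonal and subdiagonal such that for all i,j ∈ {1,...,k}, b_{i,j} = -(b*_{i+1,j}·b*_{i,j+1})/(b*_{i,j}·b*_{i+1,j+1}). Let C be any (k+1)×(k+1) matrix with nonzero entries whose consecutive negated double ratios also give the entries of B, i.e. b_{i,j} = -(c_{i+1,j}·c_{i,j+1})/(c_{i,j}·c_{i+1,j+1}) for all i,j. Then det(C) = (∏_{i=1}^{k+1} c_{i,i}) · det(B*). -/
import Mathlib

lemma devron_key {n : ℕ} (D : Fin (n+1) → Fin (n+1) → ℂ) (hD0 : ∀ i j, D i j ≠ 0)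
    (h : ∀ i j : Fin n, D i.succ j.castSucc * D i.castSucc j.succ =
      D i.castSucc j.castSucc * D i.succ j.succ) :
    ∀ i j, D i j * D 0 0 = D i 0 * D 0 j := by
  intro i
  induction i using Fin.induction with
  | zero => intro j; ring
  | succ i ih =>
    intro j
    induction j using Fin.induction with
    | zero => ring
    | succ j ihj =>
      have hh := h i j
      have h1 := ih j.succ
      have h2 := ih j.castSucc
      have e1 : D i.castSucc 0 ≠ 0 := hD0 _ _
      have e2 : D 0 j.castSucc ≠ 0 := hD0 _ _
      have key : (D i.succ j.castSucc * D i.castSucc j.succ) * (D 0 0 * D 0 0) =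
          (D i.succ 0 * D 0 j.castSucc) * (D i.castSucc 0 * D 0 j.succ) := by
        rw [show (D i.succ j.castSucc * D i.castSucc j.succ) * (D 0 0 * D 0 0)
            = (D i.succ j.castSucc * D 0 0) * (D i.castSucc j.succ * D 0 0) by ring,
          ihj, h1]
      rw [hh] at key
      apply mul_left_cancel₀ (mul_ne_zero e1 e2)
      linear_combination key - D i.succ j.succ * D 0 0 * h2

/-- If `B*` is the lift of a `k×k` matrix `B` (ones on the diagonal and subdiagonal,
consecutive negated double ratios giving `B`) and `C` is any `(k+1)×(k+1)` matrix whose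
consecutive negated double ratios also give `B`, then
`det C = (∏ i, c_{i,i}) · det B*`. -/
theorem devron_stmt_9 (k : ℕ)
    (B : Matrix (Fin k) (Fin k) ℂ) (hB : ∀ i j, B i j ≠ 0)
    (Bs : Matrix (Fin (k + 1)) (Fin (k + 1)) ℂ)
    (hBs : ∀ i j, Bs i j ≠ 0)
    (hBsDiag : ∀ i : Fin (k + 1), Bs i i = 1)
    (hBsSub : ∀ i : Fin k, Bs i.succ i.castSucc = 1)
    (hBsRatio : ∀ i j : Fin k,
      B i j = -(Bs i.succ j.castSucc * Bs i.castSucc j.succ) /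
        (Bs i.castSucc j.castSucc * Bs i.succ j.succ))
    (C : Matrix (Fin (k + 1)) (Fin (k + 1)) ℂ)
    (hC : ∀ i j, C i j ≠ 0)
    (hCRatio : ∀ i j : Fin k,
      B i j = -(C i.succ j.castSucc * C i.castSucc j.succ) /
        (C i.castSucc j.castSucc * C i.succ j.succ)) :
    C.det = (∏ i, C i i) * Bs.det := by
  set D : Fin (k+1) → Fin (k+1) → ℂ := fun i j => C i j / Bs i j with hDdef
  have hD0 : ∀ i j, D i j ≠ 0 := fun i j => div_ne_zero (hC i j) (hBs i j)
  have hrel : ∀ i j : Fin k, D i.succ j.castSucc * D i.castSucc j.succ =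
      D i.castSucc j.castSucc * D i.succ j.succ := by
    intro i j
    have h1 := (hCRatio i j).symm.trans (hBsRatio i j)
    have hCd : C i.castSucc j.castSucc * C i.succ j.succ ≠ 0 :=
      mul_ne_zero (hC _ _) (hC _ _)
    have hBd : Bs i.castSucc j.castSucc * Bs i.succ j.succ ≠ 0 :=
      mul_ne_zero (hBs _ _) (hBs _ _)
    rw [div_eq_div_iff hCd hBd] at h1
    simp only [hDdef]
    rw [div_mul_div_comm, div_mul_div_comm,
      div_eq_div_iff (mul_ne_zero (hBs _ _) (hBs _ _)) (mul_ne_zero (hBs _ _) (hBs _ _))]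
    linear_combination -h1
  have hkey := devron_key D hD0 hrel
  have h00 : D 0 0 ≠ 0 := hD0 0 0
  have hCfact : ∀ i j, C i j = D i 0 * (D 0 j / D 0 0) * Bs i j := by
    intro i j
    have hk := hkey i j
    have hD : D i j = D i 0 * (D 0 j / D 0 0) := by
      field_simp
      linear_combination hk
    calc C i j = D i j * Bs i j := by
          simp only [hDdef]; rw [div_mul_cancel₀ _ (hBs i j)]
      _ = D i 0 * (D 0 j / D 0 0) * Bs i j := by rw [hD]
  have hCeq : C = Matrix.diagonal (fun i => D i 0) * Bs *
      Matrix.diagonal (fun j => D 0 j / D 0 0) := by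
    ext i j
    simp [Matrix.mul_apply, Matrix.diagonal]
    rw [hCfact i j]; ring
  have hp : (∏ i, C i i) = (∏ i, D i 0) * ∏ i, D 0 i / D 0 0 := by
    rw [show (∏ i, C i i) = ∏ i, D i 0 * (D 0 i / D 0 0) from
      Finset.prod_congr rfl fun i _ => by rw [hCfact i i, hBsDiag i, mul_one],
      Finset.prod_mul_distrib]
  calc C.det = (∏ i, D i 0) * Bs.det * ∏ i, D 0 i / D 0 0 := by
        rw [hCeq, Matrix.det_mul, Matrix.det_mul, Matrix.det_diagonal, Matrix.det_diagonal]
    _ = (∏ i, C i i) * Bs.det := by rw [hp]; ring
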